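/- arXiv:2411.07935 — 2 statements merged into one kernel-verified Lean document; each statement's English description precedes it below -/
import Mathlib

section
/- If D is a digraph with arc uv such that u has outdegree 1 and v has indegree 1, then ‖A_0(D)‖_* = ‖A_0(D − uv)‖_* + 1, i.e., deleting such an arc decreases the trace norm of the adjacency matrix by exactly 1. -/
open Matrix BigOperators

/-- Trace norm: sum of singular values (square roots of eigenvalues of `M * Mᴴ`). -/
noncomputable def traceNorm {m : Type*} [Fintype m] [DecidableEq m]
    (M : Matrix m m ℝ) : ℝ :=
  ∑ i, Real.sqrt ((Matrix.isHermitian_mul_conjTranspose_self M).eigenvalues i)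

/-- Outdegree of a vertex in a digraph. -/
def outDeg {V : Type*} [Fintype V] (G : Digraph V) [DecidableRel G.Adj] (u : V) : ℕ :=
  (Finset.univ.filter (fun w => G.Adj u w)).card

/-- Indegree of a vertex in a digraph. -/
def inDeg {V : Type*} [Fintype V] (G : Digraph V) [DecidableRel G.Adj] (u : V) : ℕ :=
  (Finset.univ.filter (fun w => G.Adj w u)).card

/-- The `A_α` matrix of a digraph: `α Δ⁺ + (1-α) A`. -/
noncomputable def Aalpha {V : Type*} [Fintype V] [DecidableEq V] (α : ℝ)
    (G : Digraph V) [DecidableRel G.Adj] : Matrix V V ℝ :=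
  α • Matrix.diagonal (fun v => (outDeg G v : ℝ)) +
    (1 - α) • Matrix.of (fun i j => if G.Adj i j then (1 : ℝ) else 0)

/-- Deleting the arc `uv` from a digraph. -/
def delArc {V : Type*} [DecidableEq V] (G : Digraph V) (u v : V) : Digraph V :=
  ⟨fun i j => G.Adj i j ∧ ¬(i = u ∧ j = v)⟩

instance {V : Type*} [DecidableEq V] (G : Digraph V) [DecidableRel G.Adj] (u v : V) :
    DecidableRel (delArc G u v).Adj :=
  fun i j => inferInstanceAs (Decidable (G.Adj i j ∧ ¬(i = u ∧ j = v)))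

/-- Deleting a vertex `u` (and all incident arcs) from a digraph. -/
def delVertex {V : Type*} (G : Digraph V) (u : V) : Digraph {w : V // w ≠ u} :=
  ⟨fun i j => G.Adj i j⟩

instance {V : Type*} (G : Digraph V) [DecidableRel G.Adj] (u : V) :
    DecidableRel (delVertex G u).Adj :=
  fun i j => inferInstanceAs (Decidable (G.Adj i j))


open scoped MatrixOrder in
/-- Square root of a positive semidefinite matrix (via the continuous functional calculus). -/
noncomputable def Matrix.PosSemidef.sqrt {n : Type*} [Fintype n] [DecidableEq n]
    {A : Matrix n n ℝ} (_hA : A.PosSemidef) : Matrix n n ℝ :=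
  CFC.sqrt A

open scoped MatrixOrder in
lemma Matrix.PosSemidef.posSemidef_sqrt {n : Type*} [Fintype n] [DecidableEq n]
    {A : Matrix n n ℝ} (hA : A.PosSemidef) : hA.sqrt.PosSemidef :=
  (CFC.sqrt_nonneg A).posSemidef

open scoped MatrixOrder in
lemma Matrix.PosSemidef.sqrt_mul_self {n : Type*} [Fintype n] [DecidableEq n]
    {A : Matrix n n ℝ} (hA : A.PosSemidef) : hA.sqrt * hA.sqrt = A :=
  CFC.sqrt_mul_sqrt_self A hA.nonneg

open scoped MatrixOrder in
lemma Matrix.PosSemidef.eq_sqrt_of_sq_eq {n : Type*} [Fintype n] [DecidableEq n]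
    {A B : Matrix n n ℝ} (hB : B.PosSemidef) (hA : A.PosSemidef) (hAB : B ^ 2 = A) :
    B = hA.sqrt :=
  ((CFC.sqrt_eq_iff A B hA.nonneg hB.nonneg).mpr (by rw [← sq]; exact hAB)).symm

open scoped MatrixOrder in
private lemma trace_sqrt_eq_aux {n : Type*} [Fintype n] [DecidableEq n] {A : Matrix n n ℝ}
    (hA : A.PosSemidef) : hA.sqrt.trace = ∑ i, Real.sqrt (hA.1.eigenvalues i) := by
  rw [Matrix.PosSemidef.sqrt, CFC.sqrt_eq_cfc, cfc_nnreal_eq_real _ A hA.nonneg, hA.1.cfc_eq,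
    IsHermitian.cfc, Unitary.conjStarAlgAut_apply, Matrix.trace_mul_cycle]
  rw [Unitary.star_mul_self_of_mem hA.1.eigenvectorUnitary.2, one_mul, Matrix.trace_diagonal]
  simp [max_eq_left (hA.eigenvalues_nonneg _)]

private lemma traceNorm_eq_trace_sqrt_aux {m : Type*} [Fintype m] [DecidableEq m]
    (M : Matrix m m ℝ) :
    traceNorm M = (Matrix.posSemidef_self_mul_conjTranspose M).sqrt.trace := by
  rw [traceNorm, trace_sqrt_eq_aux]

theorem traceNorm_delArc_alpha_zero {V : Type*} [Fintype V] [DecidableEq V]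
    (G : Digraph V) [DecidableRel G.Adj] (u v : V) (huv : G.Adj u v)
    (hu : outDeg G u = 1) (hv : inDeg G v = 1) :
    traceNorm (Aalpha 0 G) = traceNorm (Aalpha 0 (delArc G u v)) + 1 := by
    classical
  have hadj_u : ∀ w, G.Adj u w ↔ w = v := by
    obtain ⟨a, ha⟩ := Finset.card_eq_one.mp hu
    have hva : v = a := by
      have : v ∈ Finset.univ.filter (fun w => G.Adj u w) := by simp [huv]
      rw [ha] at this; simpa using this
    intro w
    constructor
    · intro h
      have : w ∈ Finset.univ.filter (fun w => G.Adj u w) := by simp [h]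
      rw [ha] at this; simp at this; rw [this, ← hva]
    · rintro rfl; exact huv
  have hadj_v : ∀ w, G.Adj w v ↔ w = u := by
    obtain ⟨a, ha⟩ := Finset.card_eq_one.mp hv
    have hva : u = a := by
      have : u ∈ Finset.univ.filter (fun w => G.Adj w v) := by simp [huv]
      rw [ha] at this; simpa using this
    intro w
    constructor
    · intro h
      have : w ∈ Finset.univ.filter (fun w => G.Adj w v) := by simp [h]
      rw [ha] at this; simp at this; rw [this, ← hva]
    · rintro rfl; exact huv
  set A : Matrix V V ℝ := Matrix.of (fun i j => if G.Adj i j then (1:ℝ) else 0) with hAdef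
  set B : Matrix V V ℝ :=
    Matrix.of (fun i j => if (delArc G u v).Adj i j then (1:ℝ) else 0) with hBdef
  have hAeq : Aalpha 0 G = A := by rw [hAdef]; simp [Aalpha]
  have hBeq : Aalpha 0 (delArc G u v) = B := by rw [hBdef]; simp [Aalpha]
  have hdel : ∀ i j, (delArc G u v).Adj i j ↔ G.Adj i j ∧ ¬(i = u ∧ j = v) := fun i j => Iff.rfl
  have hBu : ∀ k, B u k = 0 := by
    intro k
    rw [hBdef]; simp only [Matrix.of_apply]
    rw [if_neg]
    rw [hdel]
    rintro ⟨h1, h2⟩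
    exact h2 ⟨rfl, (hadj_u k).mp h1⟩
  have hBv : ∀ i, B i v = 0 := by
    intro i
    rw [hBdef]; simp only [Matrix.of_apply]
    rw [if_neg]
    rw [hdel]
    rintro ⟨h1, h2⟩
    exact h2 ⟨(hadj_v i).mp h1, rfl⟩
  have hAu : ∀ k, A u k = if k = v then 1 else 0 := by
    intro k; rw [hAdef]; simp only [Matrix.of_apply]; exact if_congr (hadj_u k) rfl rfl
  have hAv : ∀ i, A i v = if i = u then 1 else 0 := by
    intro i; rw [hAdef]; simp only [Matrix.of_apply]; exact if_congr (hadj_v i) rfl rfl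
  have hABne : ∀ i k, i ≠ u → A i k = B i k := by
    intro i k hi
    rw [hAdef, hBdef]; simp only [Matrix.of_apply]
    refine if_congr ?_ rfl rfl
    rw [hdel]
    exact ⟨fun h => ⟨h, fun hc => hi hc.1⟩, And.left⟩
  -- key identity
  have hkey : A * Aᴴ = B * Bᴴ + Matrix.diagonal (fun k => if k = u then (1:ℝ) else 0) := by
    ext i j
    simp only [Matrix.add_apply, Matrix.mul_apply, Matrix.conjTranspose_apply, star_trivial,
      Matrix.diagonal_apply]
    by_cases hi : i = u
    · rw [hi]
      by_cases hj : j = u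
      · rw [hj]
        have h1 : ∀ k ∈ Finset.univ, A u k * A u k = if k = v then (1:ℝ) else 0 := by
          intro k _; rw [hAu]; split <;> simp
        have h2 : ∀ k ∈ Finset.univ, B u k * B u k = (0:ℝ) := by
          intro k _; rw [hBu]; ring
        rw [Finset.sum_congr rfl h1, Finset.sum_congr rfl h2]
        simp
      · have h1 : ∀ k ∈ Finset.univ, A u k * A j k = if k = v then A j k else 0 := by
          intro k _; rw [hAu]; split <;> ring
        have h2 : ∀ k ∈ Finset.univ, B u k * B j k = (0:ℝ) := by
          intro k _; rw [hBu]; ring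
        rw [Finset.sum_congr rfl h1, Finset.sum_congr rfl h2]
        simp [hAv, hj, Ne.symm hj]
    · by_cases hj : j = u
      · rw [hj]
        have h1 : ∀ k ∈ Finset.univ, A i k * A u k = if k = v then A i k else 0 := by
          intro k _; rw [hAu]; split <;> ring
        have h2 : ∀ k ∈ Finset.univ, B i k * B u k = (0:ℝ) := by
          intro k _; rw [hBu]; ring
        rw [Finset.sum_congr rfl h1, Finset.sum_congr rfl h2]
        simp [hAv, hi]
      · have h1 : ∀ k ∈ Finset.univ, A i k * A j k = B i k * B j k := by
          intro k _; rw [hABne i k hi, hABne j k hj]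
        rw [Finset.sum_congr rfl h1]
        simp [hi]
  -- square-root analysis
  set E : Matrix V V ℝ := Matrix.diagonal (fun k => if k = u then (1:ℝ) else 0) with hEdef
  have hBB := Matrix.posSemidef_self_mul_conjTranspose B
  have hAA := Matrix.posSemidef_self_mul_conjTranspose A
  set S := hBB.sqrt with hSdef
  have hSpsd : S.PosSemidef := hBB.posSemidef_sqrt
  have hSherm : Sᴴ = S := hSpsd.1
  have hSsq : S * S = B * Bᴴ := hBB.sqrt_mul_self
  have hSu : ∀ k, S u k = 0 := by
    have h0 : ∑ k, S u k * S u k = 0 := by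
      have hz : (S * S) u u = 0 := by
        rw [hSsq]
        simp only [Matrix.mul_apply, Matrix.conjTranspose_apply, star_trivial]
        exact Finset.sum_eq_zero (fun k _ => by rw [hBu]; ring)
      rw [Matrix.mul_apply] at hz
      rw [← hz]
      refine Finset.sum_congr rfl (fun k _ => ?_)
      congr 1
      conv_lhs => rw [← hSherm]
      simp [Matrix.conjTranspose_apply]
    intro k
    have hk := (Finset.sum_eq_zero_iff_of_nonneg
      (fun k _ => mul_self_nonneg (S u k))).mp h0 k (Finset.mem_univ k)
    exact mul_self_eq_zero.mp hk
  have hSu' : ∀ k, S k u = 0 := by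
    intro k
    conv_lhs => rw [← hSherm]
    simp [Matrix.conjTranspose_apply, hSu]
  have hEpsd : E.PosSemidef := by
    rw [hEdef]
    refine Matrix.posSemidef_diagonal_iff.mpr (fun i => ?_)
    split <;> norm_num
  have hSE : S * E = 0 := by
    ext i j
    rw [hEdef]
    simp only [Matrix.mul_apply, Matrix.diagonal_apply, Matrix.zero_apply]
    refine Finset.sum_eq_zero (fun k _ => ?_)
    by_cases hk : k = j
    · subst hk
      by_cases hk2 : k = u
      · subst hk2; rw [hSu']; ring
      · simp [hk2]
    · simp [hk]
  have hES : E * S = 0 := by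
    ext i j
    rw [hEdef]
    simp only [Matrix.mul_apply, Matrix.diagonal_apply, Matrix.zero_apply]
    refine Finset.sum_eq_zero (fun k _ => ?_)
    by_cases hk : i = k
    · subst hk
      by_cases hk2 : i = u
      · subst hk2; rw [hSu]; ring
      · simp [hk2]
    · simp [hk]
  have hEE : E * E = E := by
    rw [hEdef, Matrix.diagonal_mul_diagonal]
    ext i j
    by_cases h : i = u <;> simp [Matrix.diagonal_apply, h]
  have hsq : (S + E) ^ 2 = A * Aᴴ := by
    rw [hkey, pow_two, add_mul, mul_add, mul_add, hSE, hES, hEE, hSsq]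
    rw [add_zero, zero_add]
  have hsqrt : S + E = hAA.sqrt := (hSpsd.add hEpsd).eq_sqrt_of_sq_eq hAA hsq
  have hEtr : E.trace = 1 := by
    rw [hEdef, Matrix.trace_diagonal]
    simp
  rw [hAeq, hBeq, traceNorm_eq_trace_sqrt_aux, traceNorm_eq_trace_sqrt_aux,
    ← hsqrt, Matrix.trace_add, hEtr, ← hSdef]
end

section
/- Let U be a unicyclic digraph on n vertices (a digraph whose underlying structure has exactly n arcs forming one cycle plus trees) and α ∈ [0,1). Then ‖A_α(U)‖_* ≤ n·√(2α² − 2α + 1), with equality if and only if α = 0 and U is the directed cycle C⃗_n. -/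
open Matrix BigOperators

/-- The number of arcs of a digraph. -/
def numArcs {V : Type*} [Fintype V] (G : Digraph V) [DecidableRel G.Adj] : ℕ :=
  (Finset.univ.filter (fun p : V × V => G.Adj p.1 p.2)).card

/-- The underlying simple graph of a digraph. -/
def underlying {V : Type*} (G : Digraph V) : SimpleGraph V where
  Adj u v := u ≠ v ∧ (G.Adj u v ∨ G.Adj v u)
  symm := ⟨fun u v ⟨h1, h2⟩ => ⟨h1.symm, h2.symm⟩⟩
  loopless := ⟨fun u h => h.1 rfl⟩

/-- A unicyclic digraph on `n` vertices: no symmetric arcs, connected underlying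
graph, and exactly `n` arcs (so the underlying graph has exactly one cycle). -/
def IsUnicyclic {n : ℕ} (G : Digraph (Fin n)) [DecidableRel G.Adj] : Prop :=
  (∀ u v, G.Adj u v → ¬ G.Adj v u) ∧ (underlying G).Connected ∧ numArcs G = n

section Dual
variable {V : Type*} [Fintype V] [DecidableEq V]

set_option linter.unusedSectionVars false

lemma euclid_inner_eq (x y : EuclideanSpace ℝ V) :
    (inner ℝ x y : ℝ) = ∑ i, x i * y i := by
  simp [PiLp.inner_apply, RCLike.inner_apply, mul_comm]

lemma exists_dual_matrix (M : Matrix V V ℝ) :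
    ∃ O : Matrix V V ℝ, Oᵀ * O = 1 ∧ Matrix.trace (O * M) = traceNorm M := by
  classical
  set hS := Matrix.isHermitian_mul_conjTranspose_self M with hhS
  set lam := hS.eigenvalues with hlam
  have hlam0 : ∀ i, 0 ≤ lam i := fun i =>
    Matrix.eigenvalues_self_mul_conjTranspose_nonneg M i
  set b₀ := hS.eigenvectorBasis with hb₀
  have hSmul : ∀ i, (M * Mᴴ) *ᵥ ⇑(b₀ i) = lam i • ⇑(b₀ i) := fun i =>
    hS.mulVec_eigenvectorBasis i
  have hMH : Mᴴ = Mᵀ := by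
    ext i j; simp [Matrix.conjTranspose_apply]
  set w : V → EuclideanSpace ℝ V := fun i =>
    (WithLp.equiv 2 (V → ℝ)).symm (Mᴴ *ᵥ ⇑(b₀ i)) with hw
  have hortho : ∀ i j, ∑ r, b₀ i r * b₀ j r = if i = j then (1:ℝ) else 0 := by
    intro i j
    rw [← euclid_inner_eq]
    exact orthonormal_iff_ite.mp b₀.orthonormal i j
  have hww : ∀ i j, ∑ r, w i r * w j r = lam i * (if i = j then (1:ℝ) else 0) := by
    intro i j
    have h1 : ∑ r, w i r * w j r = (Mᴴ *ᵥ ⇑(b₀ i)) ⬝ᵥ (Mᴴ *ᵥ ⇑(b₀ j)) := rfl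
    rw [h1, hMH, Matrix.mulVec_transpose, Matrix.dotProduct_mulVec,
      Matrix.vecMul_vecMul, ← Matrix.mulVec_transpose (M * Mᵀ)]
    have hsymm : (M * Mᵀ)ᵀ = M * Mᵀ := by
      have h2 := hS; rw [Matrix.IsHermitian, hMH] at h2
      simpa [hMH] using h2
    rw [hsymm, show M * Mᵀ = M * Mᴴ by rw [hMH], hSmul i, smul_dotProduct,
      show ⇑(b₀ i) ⬝ᵥ ⇑(b₀ j) = ∑ r, b₀ i r * b₀ j r from rfl, hortho i j, smul_eq_mul]
  -- vanishing for zero eigenvalues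
  have hw0 : ∀ i, lam i = 0 → ∀ r, w i r = 0 := by
    intro i h0 r
    have h1 : ∑ r, w i r * w i r = 0 := by rw [hww i i]; simp [h0]
    have h2 : ∀ r ∈ Finset.univ, (0:ℝ) ≤ w i r * w i r := fun r _ => mul_self_nonneg _
    have := (Finset.sum_eq_zero_iff_of_nonneg h2).mp h1 r (Finset.mem_univ r)
    nlinarith [this]
  -- orthonormal family on the support of lam
  set s : Set V := {i | lam i ≠ 0} with hs
  set v' : V → EuclideanSpace ℝ V := fun i => (Real.sqrt (lam i))⁻¹ • w i with hv'
  have hv'app : ∀ i r, v' i r = (Real.sqrt (lam i))⁻¹ * w i r := by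
    intro i r; simp [hv', PiLp.smul_apply, smul_eq_mul]
  have hon : Orthonormal ℝ (s.restrict v') := by
    rw [orthonormal_iff_ite]
    intro ⟨i, hi⟩ ⟨j, hj⟩
    rw [euclid_inner_eq]
    simp only [Set.restrict_apply]
    have hli : 0 < lam i := lt_of_le_of_ne (hlam0 i) (Ne.symm hi)
    have hlj : 0 < lam j := lt_of_le_of_ne (hlam0 j) (Ne.symm hj)
    have : ∑ r, v' i r * v' j r
        = (Real.sqrt (lam i))⁻¹ * (Real.sqrt (lam j))⁻¹ * ∑ r, w i r * w j r := by
      rw [Finset.mul_sum]; apply Finset.sum_congr rfl; intro r _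
      rw [hv'app, hv'app]; ring
    change ∑ r, v' i r * v' j r = _
    rw [this, hww i j]
    by_cases hij : i = j
    · subst hij
      simp only [if_pos rfl, Subtype.mk.injEq, mul_one, if_true, eq_self_iff_true]
      have hsq : Real.sqrt (lam i) * Real.sqrt (lam i) = lam i :=
        Real.mul_self_sqrt (hlam0 i)
      have hsp : (0:ℝ) < Real.sqrt (lam i) := Real.sqrt_pos.mpr hli
      have hsp : Real.sqrt (lam i) ≠ 0 := ne_of_gt hsp
      field_simp
      rw [Real.sq_sqrt (hlam0 i)]
    · simp [hij, Subtype.mk.injEq]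
  obtain ⟨b, hb⟩ := hon.exists_orthonormalBasis_extension_of_card_eq
    (by simp [finrank_euclideanSpace])
  have hbortho : ∀ i j, ∑ r, b i r * b j r = if i = j then (1:ℝ) else 0 := by
    intro i j; rw [← euclid_inner_eq]; exact orthonormal_iff_ite.mp b.orthonormal i j
  have hbw : ∀ i, ∑ r, b i r * w i r = Real.sqrt (lam i) := by
    intro i
    by_cases hi : lam i = 0
    · rw [hi, Real.sqrt_zero]
      apply Finset.sum_eq_zero; intro r _; rw [hw0 i hi r, mul_zero]
    · have hbi : b i = v' i := hb i hi
      have hli : 0 < lam i := lt_of_le_of_ne (hlam0 i) (Ne.symm hi)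
      have hsq : Real.sqrt (lam i) * Real.sqrt (lam i) = lam i := Real.mul_self_sqrt (hlam0 i)
      have hsp : Real.sqrt (lam i) ≠ 0 := ne_of_gt (Real.sqrt_pos.mpr hli)
      have h3 : ∑ r, b i r * w i r = (Real.sqrt (lam i))⁻¹ * ∑ r, w i r * w i r := by
        rw [Finset.mul_sum]; apply Finset.sum_congr rfl; intro r _
        rw [hbi, hv'app]; ring
      rw [h3, hww i i, if_pos rfl, mul_one]
      field_simp
      rw [Real.sq_sqrt (hlam0 i)]
  have hwapp2 : ∀ i j, w i j = ∑ k, M k j * b₀ i k := by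
    intro i j
    show (Mᴴ *ᵥ ⇑(b₀ i)) j = _
    rw [Matrix.mulVec]
    simp [dotProduct, Matrix.conjTranspose_apply]
  have hpar : ∀ k k', ∑ i, b₀ i k * b₀ i k' = if k = k' then (1:ℝ) else 0 := by
    intro k k'
    have h := b₀.sum_inner_mul_inner (𝕜 := ℝ)
      (EuclideanSpace.single k (1:ℝ)) (EuclideanSpace.single k' (1:ℝ))
    simp only [EuclideanSpace.inner_single_left, EuclideanSpace.inner_single_right,
      _root_.map_one, one_mul, mul_one, conj_trivial] at h
    rw [h, EuclideanSpace.single_apply]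
    simp [eq_comm]
  set O : Matrix V V ℝ := Matrix.of (fun j k => ∑ i, b i j * b₀ i k) with hO
  refine ⟨O, ?_, ?_⟩
  · ext k k'
    rw [Matrix.mul_apply]
    have h1 : ∀ j, Oᵀ k j * O j k' = ∑ i, ∑ i', (b i j * b i' j) * (b₀ i k * b₀ i' k') := by
      intro j
      rw [Matrix.transpose_apply]
      show (∑ i, b i j * b₀ i k) * (∑ i', b i' j * b₀ i' k') = _
      rw [Finset.sum_mul_sum]
      apply Finset.sum_congr rfl; intro i _; apply Finset.sum_congr rfl; intro i' _; ring
    rw [Finset.sum_congr rfl (fun j _ => h1 j)]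
    have h2 : ∑ j, ∑ i, ∑ i', (b i j * b i' j) * (b₀ i k * b₀ i' k')
        = ∑ i, ∑ i', (∑ j, b i j * b i' j) * (b₀ i k * b₀ i' k') := by
      rw [Finset.sum_comm]
      apply Finset.sum_congr rfl; intro i _
      rw [Finset.sum_comm]
      apply Finset.sum_congr rfl; intro i' _
      rw [Finset.sum_mul]
    rw [h2]
    have h3 : ∀ i, ∑ i', (∑ j, b i j * b i' j) * (b₀ i k * b₀ i' k')
        = b₀ i k * b₀ i k' := by
      intro i
      have h4 : ∀ i', (∑ j, b i j * b i' j) * (b₀ i k * b₀ i' k')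
          = if i = i' then b₀ i k * b₀ i' k' else 0 := by
        intro i'; rw [hbortho i i', ite_mul, one_mul, zero_mul]
      rw [Finset.sum_congr rfl (fun i' _ => h4 i')]
      simp
    rw [Finset.sum_congr rfl (fun i _ => h3 i), hpar k k', Matrix.one_apply]
  · have h1 : ∀ j, (O * M) j j = ∑ k, ∑ i, (b i j * b₀ i k) * M k j := by
      intro j; rw [Matrix.mul_apply]; apply Finset.sum_congr rfl; intro k _
      show (∑ i, b i j * b₀ i k) * M k j = _
      rw [Finset.sum_mul]
    have htr : Matrix.trace (O * M) = ∑ i, Real.sqrt (lam i) := by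
      rw [Matrix.trace]
      calc ∑ j, (O * M).diag j = ∑ j, ∑ k, ∑ i, (b i j * b₀ i k) * M k j :=
            Finset.sum_congr rfl fun j _ => h1 j
        _ = ∑ j, ∑ i, ∑ k, (b i j * b₀ i k) * M k j := by
            apply Finset.sum_congr rfl; intro j _
            exact Finset.sum_comm
        _ = ∑ i, ∑ j, ∑ k, (b i j * b₀ i k) * M k j := Finset.sum_comm
        _ = ∑ i, ∑ j, b i j * w i j := by
            apply Finset.sum_congr rfl; intro i _
            apply Finset.sum_congr rfl; intro j _
            rw [hwapp2, Finset.mul_sum]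
            apply Finset.sum_congr rfl; intro k _
            ring
        _ = ∑ i, Real.sqrt (lam i) := Finset.sum_congr rfl fun i _ => hbw i
    exact htr.trans (by unfold traceNorm; rfl)
end Dual

section Arith
variable {α a b : ℝ}

lemma arc_le (h0 : 0 ≤ α) (h1 : α < 1) (hab : a * a + b * b ≤ 1) :
    α * a + (1 - α) * b ≤ Real.sqrt (α ^ 2 + (1 - α) ^ 2) := by
  have hs : (0:ℝ) < α ^ 2 + (1 - α) ^ 2 := by nlinarith
  have h2 : Real.sqrt (α ^ 2 + (1 - α) ^ 2) * Real.sqrt (α ^ 2 + (1 - α) ^ 2)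
      = α ^ 2 + (1 - α) ^ 2 := Real.mul_self_sqrt hs.le
  have h3 : 0 < Real.sqrt (α ^ 2 + (1 - α) ^ 2) := Real.sqrt_pos.mpr hs
  nlinarith [sq_nonneg (α * b - (1 - α) * a),
    sq_nonneg (α * a + (1 - α) * b - Real.sqrt (α ^ 2 + (1 - α) ^ 2)),
    sq_nonneg (α * a + (1 - α) * b + Real.sqrt (α ^ 2 + (1 - α) ^ 2))]

lemma arc_eq (h0 : 0 ≤ α) (h1 : α < 1) (hab : a * a + b * b ≤ 1)
    (he : α * a + (1 - α) * b = Real.sqrt (α ^ 2 + (1 - α) ^ 2)) :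
    a = α / Real.sqrt (α ^ 2 + (1 - α) ^ 2) ∧
      b = (1 - α) / Real.sqrt (α ^ 2 + (1 - α) ^ 2) ∧ a * a + b * b = 1 := by
  set c := Real.sqrt (α ^ 2 + (1 - α) ^ 2) with hc
  have hs : (0:ℝ) < α ^ 2 + (1 - α) ^ 2 := by nlinarith
  have h2 : c * c = α ^ 2 + (1 - α) ^ 2 := Real.mul_self_sqrt hs.le
  have hcpos : 0 < c := Real.sqrt_pos.mpr hs
  have hc0 : c ≠ 0 := ne_of_gt hcpos
  have ht2 : (α * a + (1 - α) * b) ^ 2 = α ^ 2 + (1 - α) ^ 2 := by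
    rw [he]; rw [sq]; exact h2
  have hd2 : (α * b - (1 - α) * a) ^ 2 ≤ 0 := by nlinarith
  have hd : α * b - (1 - α) * a = 0 := by nlinarith [sq_nonneg (α * b - (1 - α) * a)]
  have hsum : a * a + b * b = 1 := by nlinarith
  have h5 : (α ^ 2 + (1 - α) ^ 2) * a = α * c := by linear_combination α * he - (1 - α) * hd
  have h6 : (α ^ 2 + (1 - α) ^ 2) * b = (1 - α) * c := by
    linear_combination (1 - α) * he + α * hd
  refine ⟨?_, ?_, hsum⟩
  · rw [eq_div_iff hc0]
    have h7 : (a * c) * c = α * c := by linear_combination h5 + a * h2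
    exact mul_right_cancel₀ hc0 h7
  · rw [eq_div_iff hc0]
    have h7 : (b * c) * c = (1 - α) * c := by linear_combination h6 + b * h2
    exact mul_right_cancel₀ hc0 h7

end Arith

section Trace
variable {V : Type*} [Fintype V] [DecidableEq V]

lemma hdeg_cast (G : Digraph V) [DecidableRel G.Adj] (k : V) :
    (outDeg G k : ℝ) = ∑ j, (if G.Adj k j then (1:ℝ) else 0) := by
  rw [outDeg, Finset.card_filter]
  push_cast
  apply Finset.sum_congr rfl
  intro j _
  split <;> simp

lemma trace_expand (α : ℝ) (G : Digraph V) [DecidableRel G.Adj] (O : Matrix V V ℝ) :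
    Matrix.trace (O * Aalpha α G) =
      ∑ p ∈ Finset.univ.filter (fun p : V × V => G.Adj p.1 p.2),
        (α * O p.1 p.1 + (1 - α) * O p.2 p.1) := by
  have hM : ∀ k j, (Aalpha α G) k j
      = α * (if k = j then (outDeg G k : ℝ) else 0)
        + (1 - α) * (if G.Adj k j then 1 else 0) := by
    intro k j
    simp [Aalpha, Matrix.diagonal, Matrix.add_apply, Matrix.smul_apply, smul_eq_mul]
  have key : ∀ k, ∑ j, O j k * (Aalpha α G) k j
      = ∑ j, (if G.Adj k j then α * O k k + (1 - α) * O j k else 0) := by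
    intro k
    have hsplit : ∀ j, O j k * (Aalpha α G) k j
        = (if k = j then α * (outDeg G k : ℝ) * O j k else 0)
          + (if G.Adj k j then (1 - α) * O j k else 0) := by
      intro j
      rw [hM k j]
      by_cases h1 : k = j
      · subst h1
        by_cases h2 : G.Adj k k <;> simp [h2] <;> ring
      · by_cases h2 : G.Adj k j <;> simp [h1, h2] <;> ring
    rw [Finset.sum_congr rfl fun j _ => hsplit j, Finset.sum_add_distrib,
      Finset.sum_ite_eq Finset.univ k (fun j => α * (outDeg G k : ℝ) * O j k)]
    simp only [Finset.mem_univ, if_true]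
    rw [hdeg_cast G k]
    have hA : α * (∑ j, if G.Adj k j then (1:ℝ) else 0) * O k k
        = ∑ j, (if G.Adj k j then α * O k k else 0) := by
      rw [mul_assoc, Finset.sum_mul, Finset.mul_sum]
      apply Finset.sum_congr rfl
      intro j _
      split <;> ring
    rw [hA, ← Finset.sum_add_distrib]
    apply Finset.sum_congr rfl
    intro j _
    by_cases h2 : G.Adj k j <;> simp [h2]
  rw [Matrix.trace, Finset.sum_filter, Fintype.sum_prod_type]
  calc ∑ j, (O * Aalpha α G).diag j
      = ∑ j, ∑ k, O j k * (Aalpha α G) k j := by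
        apply Finset.sum_congr rfl
        intro j _
        rw [Matrix.diag_apply, Matrix.mul_apply]
    _ = ∑ k, ∑ j, O j k * (Aalpha α G) k j := Finset.sum_comm
    _ = ∑ k, ∑ j, (if G.Adj k j then α * O k k + (1 - α) * O j k else 0) :=
        Finset.sum_congr rfl fun k _ => key k

end Trace

lemma traceNorm_of_orthogonal {V : Type*} [Fintype V] [DecidableEq V]
    (M : Matrix V V ℝ) (h : M * Mᴴ = 1) : traceNorm M = (Fintype.card V : ℝ) := by
  have hS := Matrix.isHermitian_mul_conjTranspose_self M
  have heig : ∀ i, hS.eigenvalues i = 1 := by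
    intro i
    set lam := hS.eigenvalues i with hlam
    set x : V → ℝ := ⇑(hS.eigenvectorBasis i) with hx
    have h1 : (M * Mᴴ) *ᵥ x = lam • x := hS.mulVec_eigenvectorBasis i
    rw [h, Matrix.one_mulVec] at h1
    have hnz : x ≠ 0 := by
      intro hc
      exact hS.eigenvectorBasis.orthonormal.ne_zero i (by ext r; exact congrFun hc r)
    by_contra hne
    have h2 : (lam - 1) • x = 0 := by
      rw [sub_smul, one_smul, ← h1]; simp
    rcases smul_eq_zero.mp h2 with h' | h'
    · exact hne (by linarith [sub_eq_zero.mp h'])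
    · exact hnz h'
  unfold traceNorm
  rw [Finset.sum_congr rfl fun i _ => by rw [heig i, Real.sqrt_one]]
  simp

lemma fin_val_add_one {n : ℕ} [NeZero n] (x : Fin n) :
    ((x + 1 : Fin n) : ℕ) = ((x : ℕ) + 1) % n := by
  rw [Fin.val_add, Fin.val_one', Nat.add_mod_mod]


lemma cycle_orthogonal {n : ℕ} (hn : 1 ≤ n)
    (U : Digraph (Fin n)) [DecidableRel U.Adj]
    (e : Fin n ≃ Fin n)
    (he : ∀ i j, U.Adj i j ↔ ((e j : ℕ) = ((e i : ℕ) + 1) % n)) :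
    Aalpha 0 U * (Aalpha 0 U)ᴴ = 1 := by
  haveI : NeZero n := ⟨by omega⟩
  set τ : Fin n → Fin n := fun i => e.symm (e i + 1) with hτdef
  have hτ : ∀ i j, U.Adj i j ↔ j = τ i := by
    intro i j
    rw [he i j]
    constructor
    · intro hval
      have h2 : e j = e i + 1 := Fin.ext (by rw [hval, fin_val_add_one])
      show j = e.symm (e i + 1)
      rw [← h2, Equiv.symm_apply_apply]
    · intro hj
      subst hj
      show ((e (e.symm (e i + 1)) : ℕ)) = _
      rw [Equiv.apply_symm_apply]
      exact fin_val_add_one (e i)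
  have hτinj : Function.Injective τ := by
    intro i k hik
    simp only [hτdef] at hik
    have h2 : e i + 1 = e k + 1 := e.symm.injective hik
    exact e.injective (add_right_cancel h2)
  have hA : ∀ i j, (Aalpha 0 U) i j = if U.Adj i j then (1:ℝ) else 0 := by
    intro i j
    simp [Aalpha]
  ext i k
  rw [Matrix.mul_apply]
  have : ∀ j, (Aalpha 0 U) i j * (Aalpha 0 U)ᴴ j k
      = if j = τ i then (if j = τ k then 1 else 0) else 0 := by
    intro j
    rw [Matrix.conjTranspose_apply, hA, hA]
    simp only [star_trivial]
    rw [if_congr (hτ i j) rfl rfl, if_congr (hτ k j) rfl rfl]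
    by_cases h1 : j = τ i <;> by_cases h2 : j = τ k <;> simp [h1, h2]
  rw [Finset.sum_congr rfl fun j _ => this j, Finset.sum_ite_eq' Finset.univ (τ i)]
  simp only [Finset.mem_univ, if_true]
  by_cases hik : i = k
  · subst hik; simp [Matrix.one_apply]
  · have : τ i ≠ τ k := fun hc => hik (hτinj hc)
    simp [this, Matrix.one_apply, hik]

lemma forward_equality {n : ℕ} (hn : 0 < n) {α : ℝ} (h0 : 0 ≤ α) (h1 : α < 1)
    (U : Digraph (Fin n)) [DecidableRel U.Adj] (hU : IsUnicyclic U)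
    (O : Matrix (Fin n) (Fin n) ℝ)
    (hcol : ∀ u u', ∑ r, O r u * O r u' = if u = u' then (1:ℝ) else 0)
    (harc : ∀ u v, U.Adj u v →
      α * O u u + (1 - α) * O v u = Real.sqrt (α ^ 2 + (1 - α) ^ 2)) :
    α = 0 ∧ ∃ e : Fin n ≃ Fin n, ∀ i j, U.Adj i j ↔ ((e j : ℕ) = ((e i : ℕ) + 1) % n) := by
  obtain ⟨hsym, hconn, hnum⟩ := hU
  have hnoloop : ∀ u, ¬ U.Adj u u := fun u h => hsym u u h h
  set c := Real.sqrt (α ^ 2 + (1 - α) ^ 2) with hc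
  have hs : (0:ℝ) < α ^ 2 + (1 - α) ^ 2 := by nlinarith
  have hcpos : (0:ℝ) < c := Real.sqrt_pos.mpr hs
  have hc0 : c ≠ 0 := ne_of_gt hcpos
  have hcol1 : ∀ j, ∑ r, O r j * O r j = 1 := fun j => by simpa using hcol j j
  have hstruct : ∀ u v, U.Adj u v →
      O u u = α / c ∧ O v u = (1 - α) / c ∧ ∀ r, r ≠ u → r ≠ v → O r u = 0 := by
    intro u v huv
    have huv' : u ≠ v := fun h => hnoloop u (h ▸ huv)
    have hle : O u u * O u u + O v u * O v u ≤ 1 := by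
      have hsub := Finset.sum_le_sum_of_subset_of_nonneg
        (Finset.subset_univ ({u, v} : Finset (Fin n)))
        (fun r _ _ => mul_self_nonneg (O r u))
      rw [Finset.sum_pair huv'] at hsub
      calc O u u * O u u + O v u * O v u ≤ ∑ r, O r u * O r u := hsub
        _ = 1 := hcol1 u
    obtain ⟨ha, hb, hone⟩ := arc_eq h0 h1 hle (harc u v huv)
    refine ⟨ha, hb, ?_⟩
    intro r hru hrv
    have hzero : ∑ x ∈ Finset.univ \ ({u, v} : Finset (Fin n)), O x u * O x u = 0 := by
      have h3 := Finset.sum_sdiff (f := fun x => O x u * O x u)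
        (Finset.subset_univ ({u, v} : Finset (Fin n)))
      rw [Finset.sum_pair huv', hcol1 u] at h3
      linarith
    have h4 := (Finset.sum_eq_zero_iff_of_nonneg
      (fun x _ => mul_self_nonneg (O x u))).mp hzero r
      (by simp [Finset.mem_sdiff, hru, hrv])
    exact mul_self_eq_zero.mp h4
  have huniq : ∀ u v v', U.Adj u v → U.Adj u v' → v = v' := by
    intro u v v' h1' h2'
    by_contra hne
    obtain ⟨_, hb, hz⟩ := hstruct u v h1'
    obtain ⟨_, hb', _⟩ := hstruct u v' h2'
    have hv'u : v' ≠ u := fun h => hnoloop u (h ▸ h2')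
    have h5 : O v' u = 0 := hz v' hv'u (fun h => hne h.symm)
    rw [hb'] at h5
    rw [div_eq_zero_iff] at h5
    rcases h5 with h | h
    · linarith
    · exact hc0 h
  have hdegsum : ∑ u, outDeg U u = numArcs U := by
    rw [numArcs, Finset.card_filter, Fintype.sum_prod_type]
    apply Finset.sum_congr rfl
    intro u _
    rw [outDeg, Finset.card_filter]
  have hdle : ∀ u, outDeg U u ≤ 1 := by
    intro u
    apply Finset.card_le_one.mpr
    intro a ha b hb
    exact huniq u a b (Finset.mem_filter.mp ha).2 (Finset.mem_filter.mp hb).2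
  have hdeq : ∀ u, outDeg U u = 1 := by
    intro u
    by_contra hne
    have h0' : outDeg U u = 0 := by
      have := hdle u; omega
    have hrest : ∑ v ∈ Finset.univ.erase u, outDeg U v ≤ (Finset.univ.erase u).card • 1 :=
      Finset.sum_le_card_nsmul _ _ 1 (fun v _ => hdle v)
    have htot := Finset.sum_erase_add Finset.univ (outDeg U) (Finset.mem_univ u)
    have hcard : (Finset.univ.erase u).card = n - 1 := by
      rw [Finset.card_erase_of_mem (Finset.mem_univ u), Finset.card_univ, Fintype.card_fin]
    rw [hcard, smul_eq_mul, mul_one] at hrest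
    rw [hdegsum, hnum] at htot
    omega
  have hex : ∀ u, ∃ v, U.Adj u v := by
    intro u
    have h6 := hdeq u
    rw [outDeg, Finset.card_eq_one] at h6
    obtain ⟨v, hv⟩ := h6
    have h7 : v ∈ Finset.univ.filter (fun w => U.Adj u w) := by
      rw [hv]; exact Finset.mem_singleton_self v
    exact ⟨v, (Finset.mem_filter.mp h7).2⟩
  set σ : Fin n → Fin n := fun u => Classical.choose (hex u) with hσ
  have hσadj : ∀ u, U.Adj u (σ u) := fun u => Classical.choose_spec (hex u)
  have hadj_iff : ∀ u v, U.Adj u v ↔ v = σ u :=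
    fun u v => ⟨fun h => huniq u v (σ u) h (hσadj u), fun h => h ▸ hσadj u⟩
  have hnofix : ∀ u, σ u ≠ u := by
    intro u h
    have h8 := hσadj u
    rw [h] at h8
    exact hnoloop u h8
  have hno2 : ∀ u, σ (σ u) ≠ u := by
    intro u h
    have h8 := hσadj (σ u)
    rw [h] at h8
    exact hsym u (σ u) (hσadj u) h8
  have hinj : Function.Injective σ := by
    intro u u' huu'
    by_contra hne
    obtain ⟨hOu, hOvu, hOz⟩ := hstruct u (σ u) (hσadj u)
    obtain ⟨hOu', hOvu', hOz'⟩ := hstruct u' (σ u') (hσadj u')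
    have h0' : ∑ r, O r u * O r u' = 0 := by simpa [hne] using hcol u u'
    have h1' : ∑ r, O r u * O r u' = O (σ u) u * O (σ u) u' := by
      apply Finset.sum_eq_single (σ u)
      · intro r _ hrk
        by_cases hru : r = u
        · have h9 : O u u' = 0 := by
            apply hOz' u hne
            intro h
            rw [← huu'] at h
            exact hnofix u h.symm
          rw [hru, h9, mul_zero]
        · rw [hOz r hru hrk, zero_mul]
      · intro h; exact absurd (Finset.mem_univ _) h
    rw [h1', hOvu] at h0'
    rw [← huu'] at hOvu'
    rw [hOvu'] at h0'
    have h10 := mul_self_eq_zero.mp h0'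
    rw [div_eq_zero_iff] at h10
    rcases h10 with h | h
    · linarith
    · exact hc0 h
  have hα0 : α = 0 := by
    set u : Fin n := ⟨0, hn⟩ with hu
    obtain ⟨hOu, hOvu, hOz⟩ := hstruct u (σ u) (hσadj u)
    obtain ⟨hOu', hOvu', hOz'⟩ := hstruct (σ u) (σ (σ u)) (hσadj (σ u))
    have hne : u ≠ σ u := fun h => hnofix u h.symm
    have h0' : ∑ r, O r u * O r (σ u) = 0 := by simpa [hne] using hcol u (σ u)
    have h1' : ∑ r, O r u * O r (σ u) = O (σ u) u * O (σ u) (σ u) := by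
      apply Finset.sum_eq_single (σ u)
      · intro r _ hrk
        by_cases hru : r = u
        · have h9 : O u (σ u) = 0 := by
            apply hOz' u
            · exact fun h => hnofix u h.symm
            · exact fun h => hno2 u h.symm
          rw [hru, h9, mul_zero]
        · rw [hOz r hru hrk, zero_mul]
      · intro h; exact absurd (Finset.mem_univ _) h
    rw [h1', hOvu, hOu'] at h0'
    rw [div_mul_div_comm, div_eq_zero_iff] at h0'
    rcases h0' with h | h
    · rcases mul_eq_zero.mp h with h' | h'
      · linarith
      · exact h'
    · nlinarith
  set π : Equiv.Perm (Fin n) :=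
    Equiv.ofBijective σ (Finite.injective_iff_bijective.mp hinj) with hπdef
  have hπ : ∀ u, π u = σ u := fun u => rfl
  have hsame : ∀ x y : Fin n, π.SameCycle x y := by
    intro x y
    obtain ⟨wlk⟩ := hconn.preconnected x y
    induction wlk with
    | nil => exact Equiv.Perm.SameCycle.refl _ _
    | @cons a b cc hab p ih =>
      refine Equiv.Perm.SameCycle.trans ?_ ih
      rcases (show a ≠ b ∧ (U.Adj a b ∨ U.Adj b a) from hab).2 with h' | h'
      · have hb : b = σ a := (hadj_iff a b).mp h'
        exact ⟨1, by rw [zpow_one, hπ]; exact hb.symm⟩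
      · have hb : a = σ b := (hadj_iff b a).mp h'
        exact Equiv.Perm.SameCycle.symm ⟨1, by rw [zpow_one, hπ]; exact hb.symm⟩
  have hcyc : π.IsCycle := ⟨⟨0, hn⟩, by rw [hπ]; exact hnofix _, fun y _ => hsame _ y⟩
  have hsupp : π.support = Finset.univ :=
    Finset.eq_univ_iff_forall.mpr
      (fun y => Equiv.Perm.mem_support.mpr (by rw [hπ]; exact hnofix y))
  have hn2 : 2 ≤ n := by
    have hnt : Nontrivial (Fin n) := ⟨⟨σ ⟨0, hn⟩, ⟨0, hn⟩, hnofix ⟨0, hn⟩⟩⟩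
    have := Fintype.one_lt_card_iff_nontrivial.mpr hnt
    simp at this; omega
  obtain ⟨m, rfl⟩ : ∃ m, n = m + 2 := ⟨n - 2, by omega⟩
  have hfin : (finRotate (m + 2)).IsCycle := isCycle_finRotate
  have hconj := hcyc.isConj hfin (by rw [hsupp, support_finRotate])
  rw [isConj_iff] at hconj
  obtain ⟨g, hg⟩ := hconj
  refine ⟨hα0, g, ?_⟩
  have hgπ : ∀ i, g (π i) = finRotate (m + 2) (g i) := by
    intro i
    have h11 : g * π = finRotate (m + 2) * g := by
      rw [← hg]; group
    calc g (π i) = (g * π) i := rfl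
      _ = (finRotate (m + 2) * g) i := by rw [h11]
      _ = finRotate (m + 2) (g i) := rfl
  intro i j
  rw [hadj_iff]
  haveI : NeZero (m + 2) := ⟨by omega⟩
  constructor
  · rintro rfl
    have h12 : g (σ i) = g i + 1 := by
      rw [← hπ, hgπ i, finRotate_succ_apply]
    rw [h12, fin_val_add_one]
  · intro hval
    have h2 : g j = g i + 1 := Fin.ext (by rw [hval, fin_val_add_one])
    have h3 : g j = g (π i) := by rw [h2, hgπ i, finRotate_succ_apply]
    have h4 := g.injective h3
    rw [h4, hπ]

theorem traceNorm_unicyclic {n : ℕ} (hn : 1 ≤ n) (α : ℝ) (hα : α ∈ Set.Ico (0:ℝ) 1)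
    (U : Digraph (Fin n)) [DecidableRel U.Adj] (hU : IsUnicyclic U) :
    traceNorm (Aalpha α U) ≤ (n : ℝ) * Real.sqrt (2 * α ^ 2 - 2 * α + 1) ∧
      (traceNorm (Aalpha α U) = (n : ℝ) * Real.sqrt (2 * α ^ 2 - 2 * α + 1) ↔
        α = 0 ∧ ∃ e : Fin n ≃ Fin n,
          ∀ i j, U.Adj i j ↔ ((e j : ℕ) = ((e i : ℕ) + 1) % n)) := by
  obtain ⟨h0, h1⟩ := hα
  have hrw : 2 * α ^ 2 - 2 * α + 1 = α ^ 2 + (1 - α) ^ 2 := by ring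
  rw [hrw]
  set c := Real.sqrt (α ^ 2 + (1 - α) ^ 2) with hc
  obtain ⟨O, hOO, hOtr⟩ := exists_dual_matrix (Aalpha α U)
  have hnoloop : ∀ u, ¬ U.Adj u u := fun u h => hU.1 u u h h
  have hcol : ∀ u u', ∑ r, O r u * O r u' = if u = u' then (1:ℝ) else 0 := by
    intro u u'
    have h2 : (Oᵀ * O) u u' = (1 : Matrix (Fin n) (Fin n) ℝ) u u' := by rw [hOO]
    rw [Matrix.mul_apply] at h2
    simpa [Matrix.transpose_apply, Matrix.one_apply] using h2
  have htr := trace_expand α U O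
  set F := Finset.univ.filter (fun p : Fin n × Fin n => U.Adj p.1 p.2) with hF
  have hcard : F.card = n := hU.2.2
  have harc_le : ∀ p ∈ F, α * O p.1 p.1 + (1 - α) * O p.2 p.1 ≤ c := by
    intro p hp
    have hadj : U.Adj p.1 p.2 := (Finset.mem_filter.mp hp).2
    have hne : p.1 ≠ p.2 := by
      intro h
      rw [← h] at hadj
      exact hnoloop p.1 hadj
    apply arc_le h0 h1
    have hsub := Finset.sum_le_sum_of_subset_of_nonneg
      (Finset.subset_univ ({p.1, p.2} : Finset (Fin n)))
      (fun r _ _ => mul_self_nonneg (O r p.1))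
    rw [Finset.sum_pair hne] at hsub
    calc O p.1 p.1 * O p.1 p.1 + O p.2 p.1 * O p.2 p.1
        ≤ ∑ r, O r p.1 * O r p.1 := hsub
      _ = 1 := by simpa using hcol p.1 p.1
  have hsum_le : ∑ p ∈ F, (α * O p.1 p.1 + (1 - α) * O p.2 p.1) ≤ (n:ℝ) * c := by
    calc ∑ p ∈ F, (α * O p.1 p.1 + (1 - α) * O p.2 p.1)
        ≤ ∑ _p ∈ F, c := Finset.sum_le_sum harc_le
      _ = (F.card : ℝ) * c := by rw [Finset.sum_const, nsmul_eq_mul]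
      _ = (n:ℝ) * c := by rw [hcard]
  have hineq : traceNorm (Aalpha α U) ≤ (n:ℝ) * c := by
    rw [← hOtr, htr]; exact hsum_le
  refine ⟨hineq, ?_, ?_⟩
  · intro heq
    have hsum_eq : ∑ p ∈ F, (α * O p.1 p.1 + (1 - α) * O p.2 p.1) = (n:ℝ) * c := by
      rw [← htr, hOtr]; exact heq
    have hall : ∀ p ∈ F, α * O p.1 p.1 + (1 - α) * O p.2 p.1 = c := by
      intro p hp
      by_contra hne
      have hlt : α * O p.1 p.1 + (1 - α) * O p.2 p.1 < c :=
        lt_of_le_of_ne (harc_le p hp) hne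
      have hstrict := Finset.sum_lt_sum (fun q hq => harc_le q hq) ⟨p, hp, hlt⟩
      rw [hsum_eq, Finset.sum_const, nsmul_eq_mul, hcard] at hstrict
      exact lt_irrefl _ hstrict
    have harc : ∀ u v, U.Adj u v → α * O u u + (1 - α) * O v u = c :=
      fun u v huv => hall (u, v) (Finset.mem_filter.mpr ⟨Finset.mem_univ _, huv⟩)
    exact forward_equality hn h0 h1 U hU O hcol harc
  · rintro ⟨rfl, e, he⟩
    haveI : NeZero n := ⟨by omega⟩
    have hMM : Aalpha 0 U * (Aalpha 0 U)ᴴ = 1 := cycle_orthogonal hn U e he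
    rw [traceNorm_of_orthogonal _ hMM]
    have hc1 : c = 1 := by rw [hc]; norm_num
    rw [hc1, mul_one, Fintype.card_fin]
end
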